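/- In a uniform matroid of rank r, the exchange distance of any two compatible ordered basis pairs (A_1, A_2) and (B_1, B_2) is exactly r − |A_1 ∩ B_1|. -/

import Mathlib

/-- A symmetric exchange on an ordered pair of bases. -/
def SymExch {α : Type*} (M : Matroid α) (p p' : Set α × Set α) : Prop :=
  ∃ e ∈ p.1 \ p.2, ∃ f ∈ p.2 \ p.1,
    p'.1 = insert f (p.1 \ {e}) ∧ p'.2 = (insert e p.2) \ {f} ∧
    M.IsBase p'.1 ∧ M.IsBase p'.2

/-- `ExchSeq M n p q` : there is a sequence of `n` symmetric exchanges from `p` to `q`. -/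
def ExchSeq {α : Type*} (M : Matroid α) : ℕ → Set α × Set α → Set α × Set α → Prop
  | 0, p, q => p = q
  | n + 1, p, q => ∃ p', SymExch M p p' ∧ ExchSeq M n p' q

open Set

/-- Every base of the uniform matroid of rank `r` has `r` elements. -/
lemma unif_base_ncard {α : Type*} {M : Matroid α} (hfin : M.E.Finite)
    {r : ℕ} (hrn : r ≤ M.E.ncard)
    (hUnif : ∀ X : Set α, M.Indep X ↔ X ⊆ M.E ∧ X.ncard ≤ r)
    {B : Set α} (hB : M.IsBase B) : B.ncard = r := by
  obtain ⟨hBE, hle⟩ := (hUnif B).1 hB.indep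
  by_contra hne
  have hlt : B.ncard < r := lt_of_le_of_ne hle hne
  have hBfin : B.Finite := hfin.subset hBE
  have hss : B ⊂ M.E := by
    refine hBE.ssubset_of_ne ?_
    rintro rfl
    omega
  obtain ⟨x, hxE, hxB⟩ := exists_of_ssubset hss
  have hdep := hB.insert_dep ⟨hxE, hxB⟩
  refine hdep.not_indep ((hUnif _).2 ⟨insert_subset hxE hBE, ?_⟩)
  rw [ncard_insert_of_notMem hxB hBfin]
  omega

/-- Every `r`-subset of the ground set is a base of the uniform matroid of rank `r`. -/
lemma unif_base_of_ncard {α : Type*} {M : Matroid α} (hfin : M.E.Finite)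
    {r : ℕ} (hrn : r ≤ M.E.ncard)
    (hUnif : ∀ X : Set α, M.Indep X ↔ X ⊆ M.E ∧ X.ncard ≤ r)
    {X : Set α} (hXE : X ⊆ M.E) (hX : X.ncard = r) : M.IsBase X := by
  have hXi : M.Indep X := (hUnif X).2 ⟨hXE, le_of_eq hX⟩
  obtain ⟨B, hB, hXB⟩ := hXi.exists_isBase_superset
  have hBr := unif_base_ncard hfin hrn hUnif hB
  have : X = B :=
    eq_of_subset_of_ncard_le hXB (by rw [hBr, hX]) (hfin.subset hB.subset_ground)
  rwa [this]

/-- Lower bound: each exchange increases `|p.1 ∩ B₁|` by at most one. -/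
lemma exch_lower {α : Type*} (M : Matroid α) (hfin : M.E.Finite) (B₁ B₂ : Set α) :
    ∀ n (p : Set α × Set α), ExchSeq M n p (B₁, B₂) → M.IsBase p.1 →
      B₁.ncard ≤ (p.1 ∩ B₁).ncard + n := by
  intro n
  induction n with
  | zero =>
    intro p h hb
    obtain rfl : p = (B₁, B₂) := h
    simp
  | succ n ih =>
    intro p h hb
    obtain ⟨p', ⟨e, he, f, hf, h1, h2, hb1, hb2⟩, hseq⟩ := h
    have ihp := ih p' hseq hb1
    have hsub : p'.1 ∩ B₁ ⊆ insert f (p.1 ∩ B₁) := by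
      rw [h1]
      intro x hx
      rcases hx with ⟨hx1, hx2⟩
      rcases hx1 with rfl | ⟨hxp, _⟩
      · exact mem_insert _ _
      · exact mem_insert_of_mem _ ⟨hxp, hx2⟩
    have hfin1 : (insert f (p.1 ∩ B₁)).Finite :=
      (hfin.subset hb.subset_ground).inter_of_left B₁ |>.insert f
    have h3 : (p'.1 ∩ B₁).ncard ≤ (p.1 ∩ B₁).ncard + 1 :=
      le_trans (ncard_le_ncard hsub hfin1) (ncard_insert_le _ _)
    omega

/-- Upper bound: a sequence of `|A₁ \ B₁|` exchanges exists. -/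
lemma exch_upper {α : Type*} (M : Matroid α) (hfin : M.E.Finite)
    {r : ℕ} (hrn : r ≤ M.E.ncard)
    (hUnif : ∀ X : Set α, M.Indep X ↔ X ⊆ M.E ∧ X.ncard ≤ r)
    (B₁ B₂ : Set α) (hB₁ : M.IsBase B₁) (hB₂ : M.IsBase B₂) :
    ∀ k (A₁ A₂ : Set α), M.IsBase A₁ → M.IsBase A₂ →
      A₁ ∩ A₂ = B₁ ∩ B₂ → A₁ ∪ A₂ = B₁ ∪ B₂ → (A₁ \ B₁).ncard = k →
      ExchSeq M k (A₁, A₂) (B₁, B₂) := by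
  intro k
  induction k with
  | zero =>
    intro A₁ A₂ hA₁ hA₂ hcap hcup hk
    have hA₁fin : A₁.Finite := hfin.subset hA₁.subset_ground
    have hd : A₁ \ B₁ = ∅ := (ncard_eq_zero hA₁fin.diff).1 hk
    have hsub : A₁ ⊆ B₁ := diff_eq_empty.1 hd
    have h1 : A₁ = B₁ := by
      refine eq_of_subset_of_ncard_le hsub ?_ (hfin.subset hB₁.subset_ground)
      rw [unif_base_ncard hfin hrn hUnif hB₁, unif_base_ncard hfin hrn hUnif hA₁]
    subst h1
    have h2 : A₂ = B₂ := by
      ext x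
      have hc1 := Set.ext_iff.mp hcap x
      have hc2 := Set.ext_iff.mp hcup x
      simp only [mem_inter_iff, mem_union] at hc1 hc2
      tauto
    subst h2
    rfl
  | succ k ih =>
    intro A₁ A₂ hA₁ hA₂ hcap hcup hk
    have hA₁fin : A₁.Finite := hfin.subset hA₁.subset_ground
    have hA₂fin : A₂.Finite := hfin.subset hA₂.subset_ground
    have hB₁fin : B₁.Finite := hfin.subset hB₁.subset_ground
    have hA₁r := unif_base_ncard hfin hrn hUnif hA₁
    have hA₂r := unif_base_ncard hfin hrn hUnif hA₂
    have hB₁r := unif_base_ncard hfin hrn hUnif hB₁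
    obtain ⟨e, heA₁, heB₁⟩ := nonempty_of_ncard_ne_zero (s := A₁ \ B₁) (by omega)
    have heA₂ : e ∉ A₂ := by
      intro h
      have : e ∈ B₁ ∩ B₂ := by rw [← hcap]; exact ⟨heA₁, h⟩
      exact heB₁ this.1
    -- pick f ∈ B₁ \ A₁
    have hBA : (B₁ \ A₁).Nonempty := by
      rcases Set.eq_empty_or_nonempty (B₁ \ A₁) with hemp | hne
      · exfalso
        have hsub : B₁ ⊆ A₁ := diff_eq_empty.1 hemp
        have : B₁ = A₁ := eq_of_subset_of_ncard_le hsub (by omega) hA₁fin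
        rw [← this] at heA₁
        exact heB₁ heA₁
      · exact hne
    obtain ⟨f, hfB₁, hfA₁⟩ := hBA
    have hfA₂ : f ∈ A₂ := by
      have h : f ∈ A₁ ∪ A₂ := by rw [hcup]; exact Or.inl hfB₁
      exact h.resolve_left hfA₁
    have hef : e ≠ f := fun h => hfA₁ (h ▸ heA₁)
    set A₁' := insert f (A₁ \ {e}) with hA₁'def
    set A₂' := (insert e A₂) \ {f} with hA₂'def
    -- cardinalities
    have hr1 : 1 ≤ r := by
      have := ncard_pos (s := A₁) hA₁fin |>.2 ⟨e, heA₁⟩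
      omega
    have hcard1 : A₁'.ncard = r := by
      rw [hA₁'def, ncard_insert_of_notMem (by simp [hfA₁]) (hA₁fin.diff),
        ncard_diff_singleton_of_mem heA₁, hA₁r]
      omega
    have hcard2 : A₂'.ncard = r := by
      rw [hA₂'def, ncard_diff_singleton_of_mem (mem_insert_of_mem _ hfA₂),
        ncard_insert_of_notMem heA₂ hA₂fin, hA₂r]
      omega
    -- bases
    have hA₁'E : A₁' ⊆ M.E :=
      insert_subset (hB₁.subset_ground hfB₁) (diff_subset.trans hA₁.subset_ground)
    have hA₂'E : A₂' ⊆ M.E :=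
      diff_subset.trans (insert_subset (hA₁.subset_ground heA₁) hA₂.subset_ground)
    have hA₁'b : M.IsBase A₁' := unif_base_of_ncard hfin hrn hUnif hA₁'E hcard1
    have hA₂'b : M.IsBase A₂' := unif_base_of_ncard hfin hrn hUnif hA₂'E hcard2
    -- invariants
    have hcap' : A₁' ∩ A₂' = B₁ ∩ B₂ := by
      rw [← hcap, hA₁'def, hA₂'def]
      ext x
      simp only [mem_inter_iff, mem_insert_iff, mem_diff, mem_singleton_iff]
      constructor
      · rintro ⟨h1, h2, h3⟩
        rcases h1 with rfl | ⟨hx1, hxe⟩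
        · exact absurd rfl h3
        · rcases h2 with rfl | h2
          · exact absurd rfl hxe
          · exact ⟨hx1, h2⟩
      · rintro ⟨hx1, hx2⟩
        have hxe : x ≠ e := fun h => heA₂ (h ▸ hx2)
        have hxf : x ≠ f := fun h => hfA₁ (h ▸ hx1)
        exact ⟨Or.inr ⟨hx1, hxe⟩, Or.inr hx2, hxf⟩
    have hcup' : A₁' ∪ A₂' = B₁ ∪ B₂ := by
      rw [← hcup, hA₁'def, hA₂'def]
      ext x
      simp only [mem_union, mem_insert_iff, mem_diff, mem_singleton_iff]
      constructor
      · rintro ((rfl | ⟨hx, _⟩) | ⟨(rfl | hx), _⟩)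
        · exact Or.inr hfA₂
        · exact Or.inl hx
        · exact Or.inl heA₁
        · exact Or.inr hx
      · rintro (hx | hx)
        · by_cases hxf : x = f
          · exact Or.inl (Or.inl hxf)
          · by_cases hxe : x = e
            · exact Or.inr ⟨Or.inl hxe, hxf⟩
            · exact Or.inl (Or.inr ⟨hx, hxe⟩)
        · by_cases hxf : x = f
          · exact Or.inl (Or.inl hxf)
          · exact Or.inr ⟨Or.inr hx, hxf⟩
    have hdiff : (A₁' \ B₁).ncard = k := by
      have heq : A₁' \ B₁ = (A₁ \ B₁) \ {e} := by
        rw [hA₁'def]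
        ext x
        simp only [mem_diff, mem_insert_iff, mem_singleton_iff]
        constructor
        · rintro ⟨rfl | ⟨hx, hxe⟩, hxB⟩
          · exact absurd hfB₁ hxB
          · exact ⟨⟨hx, hxB⟩, hxe⟩
        · rintro ⟨⟨hx, hxB⟩, hxe⟩
          exact ⟨Or.inr ⟨hx, hxe⟩, hxB⟩
      rw [heq, ncard_diff_singleton_of_mem (show e ∈ A₁ \ B₁ from ⟨heA₁, heB₁⟩), hk]
      omega
    show ∃ p', SymExch M (A₁, A₂) p' ∧ ExchSeq M k p' (B₁, B₂)
    refine ⟨(A₁', A₂'), ?_, ih A₁' A₂' hA₁'b hA₂'b hcap' hcup' hdiff⟩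
    exact ⟨e, ⟨heA₁, heA₂⟩, f, ⟨hfA₂, hfA₁⟩, rfl, rfl, hA₁'b, hA₂'b⟩

/-- In a uniform matroid of rank `r`, the exchange distance of any two compatible basis pairs
`(A₁, A₂)` and `(B₁, B₂)` is exactly `r - |A₁ ∩ B₁|`. -/
theorem uniform_exchange_distance {α : Type*} (M : Matroid α) (hfin : M.E.Finite)
    (r : ℕ) (hrn : r ≤ M.E.ncard)
    (hUnif : ∀ X : Set α, M.Indep X ↔ X ⊆ M.E ∧ X.ncard ≤ r)
    (A₁ A₂ B₁ B₂ : Set α)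
    (hA₁ : M.IsBase A₁) (hA₂ : M.IsBase A₂) (hB₁ : M.IsBase B₁) (hB₂ : M.IsBase B₂)
    (hcap : A₁ ∩ A₂ = B₁ ∩ B₂) (hcup : A₁ ∪ A₂ = B₁ ∪ B₂) :
    IsLeast {n : ℕ | ExchSeq M n (A₁, A₂) (B₁, B₂)} (r - (A₁ ∩ B₁).ncard) := by
  have hA₁fin : A₁.Finite := hfin.subset hA₁.subset_ground
  have hA₁r := unif_base_ncard hfin hrn hUnif hA₁
  have hB₁r := unif_base_ncard hfin hrn hUnif hB₁
  have hsplit : (A₁ ∩ B₁).ncard + (A₁ \ B₁).ncard = A₁.ncard :=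
    ncard_inter_add_ncard_diff_eq_ncard A₁ B₁ hA₁fin
  constructor
  · show ExchSeq M _ (A₁, A₂) (B₁, B₂)
    have hk : (A₁ \ B₁).ncard = r - (A₁ ∩ B₁).ncard := by omega
    exact exch_upper M hfin hrn hUnif B₁ B₂ hB₁ hB₂ _ A₁ A₂ hA₁ hA₂ hcap hcup hk
  · intro n hn
    have := exch_lower M hfin B₁ B₂ n (A₁, A₂) hn hA₁
    simp only at this
    omega
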